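/- Let $a_1,a_2\in\mathbb{R}$, $b_1,b_2,\alpha,\beta>0$, and let $\sigma_1=\sigma_2=\sigma$ with $\sigma\ne 0$, and assume $\beta+(b_2/b_1)(a_1-a_2-\alpha+\beta)-\alpha (b_2/b_1)^2\ne 0$. Define the vector fields $A_0(z,y)=\Big((b_2-b_1z)zy+\beta+\widehat a_1 z-\alpha z^2,\; y\big(\widehat a_2-\tfrac{\sigma^2}{2}-b_2y\big)+\alpha zy\Big)$ with $\widehat a_1=a_1-a_2-\alpha+\beta$ and $\widehat a_2=a_2-\beta$, and $A_1(z,y)=(0,\sigma y)$. Then for every point $(z,y)$ with $z>0$ and $y>0$, the three vectors $A_1(z,y)$, $[A_0,A_1](z,y)$, and $[A_0,[A_0,A_1]](z,y)$ span $\mathbb{R}^2$. -/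

import Mathlib

/-- Partial derivative in the first coordinate `z` of a function of two real variables. -/
noncomputable def pderivZ (f : ℝ → ℝ → ℝ) (z y : ℝ) : ℝ := deriv (fun z' => f z' y) z

/-- Partial derivative in the second coordinate `y` of a function of two real variables. -/
noncomputable def pderivY (f : ℝ → ℝ → ℝ) (z y : ℝ) : ℝ := deriv (fun y' => f z y') y

/-- The Lie bracket `[Φ, Ψ]` of two vector fields on `ℝ²` with coordinates `(z, y)`:
`[Φ,Ψ]ⱼ = Φ₁ ∂_z Ψⱼ - Ψ₁ ∂_z Φⱼ + Φ₂ ∂_y Ψⱼ - Ψ₂ ∂_y Φⱼ` for `j = 1, 2`. -/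
noncomputable def lieBracket2 (Φ Ψ : ℝ → ℝ → ℝ × ℝ) (z y : ℝ) : ℝ × ℝ :=
  ((Φ z y).1 * pderivZ (fun a b => (Ψ a b).1) z y
      - (Ψ z y).1 * pderivZ (fun a b => (Φ a b).1) z y
      + (Φ z y).2 * pderivY (fun a b => (Ψ a b).1) z y
      - (Ψ z y).2 * pderivY (fun a b => (Φ a b).1) z y,
   (Φ z y).1 * pderivZ (fun a b => (Ψ a b).2) z y
      - (Ψ z y).1 * pderivZ (fun a b => (Φ a b).2) z y
      + (Φ z y).2 * pderivY (fun a b => (Ψ a b).2) z y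
      - (Ψ z y).2 * pderivY (fun a b => (Φ a b).2) z y)

lemma deriv_quad (c0 c1 c2 x : ℝ) :
    deriv (fun t : ℝ => c0 + c1 * t + c2 * t ^ 2) x = c1 + 2 * c2 * x := by
  have h : HasDerivAt (fun t : ℝ => c0 + c1 * t + c2 * t ^ 2) (c1 + 2 * c2 * x) x := by
    have h0 : HasDerivAt (fun _ : ℝ => c0) 0 x := hasDerivAt_const x c0
    have h1 : HasDerivAt (fun t : ℝ => c1 * t) c1 x := by
      simpa using (hasDerivAt_id x).const_mul c1
    have h2 : HasDerivAt (fun t : ℝ => c2 * t ^ 2) (c2 * (2 * x)) x := by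
      simpa using (hasDerivAt_pow 2 x).const_mul c2
    refine ((h0.add h1).add h2).congr_deriv ?_
    ring
  exact h.deriv

lemma span_pair_top (v w : ℝ × ℝ) (h : v.1 * w.2 - v.2 * w.1 ≠ 0) :
    Submodule.span ℝ ({v, w} : Set (ℝ × ℝ)) = ⊤ := by
  rw [Submodule.eq_top_iff']
  intro x
  have hv : v ∈ ({v, w} : Set (ℝ × ℝ)) := by simp
  have hw : w ∈ ({v, w} : Set (ℝ × ℝ)) := by simp
  have hx : x = ((x.1 * w.2 - x.2 * w.1) / (v.1 * w.2 - v.2 * w.1)) • v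
      + ((v.1 * x.2 - v.2 * x.1) / (v.1 * w.2 - v.2 * w.1)) • w := by
    have h' : w.2 * v.1 - w.1 * v.2 ≠ 0 := by intro hc; apply h; linarith
    apply Prod.ext <;> simp [Prod.smul_def, smul_eq_mul] <;> field_simp <;> ring
  rw [hx]
  exact Submodule.add_mem _ (Submodule.smul_mem _ _ (Submodule.subset_span hv))
    (Submodule.smul_mem _ _ (Submodule.subset_span hw))

/-- **Hörmander's condition for the degenerate two-patch system with `σ₁ = σ₂ = σ`.**
Under the nondegeneracy condition `β + (b₂/b₁)(a₁-a₂-α+β) - α(b₂/b₁)² ≠ 0`, at every point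
`(z, y)` with `z > 0`, `y > 0` the vectors `A₁`, `[A₀,A₁]`, `[A₀,[A₀,A₁]]` span `ℝ²`. -/
theorem hormander_condition_two_patch_equal_noise (a₁ a₂ b₁ b₂ α β σ : ℝ)
    (hb₁ : 0 < b₁) (hb₂ : 0 < b₂) (hα : 0 < α) (hβ : 0 < β) (hσ : σ ≠ 0)
    (hnd : β + (b₂ / b₁) * (a₁ - a₂ - α + β) - α * (b₂ / b₁) ^ 2 ≠ 0)
    (A₀ A₁ : ℝ → ℝ → ℝ × ℝ)
    (hA₀ : ∀ z y : ℝ, A₀ z y =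
      ((b₂ - b₁ * z) * z * y + β + (a₁ - a₂ - α + β) * z - α * z ^ 2,
        y * ((a₂ - β) - σ ^ 2 / 2 - b₂ * y) + α * z * y))
    (hA₁ : ∀ z y : ℝ, A₁ z y = (0, σ * y)) :
    ∀ z y : ℝ, 0 < z → 0 < y →
      Submodule.span ℝ
        ({A₁ z y, lieBracket2 A₀ A₁ z y,
          lieBracket2 A₀ (lieBracket2 A₀ A₁) z y} : Set (ℝ × ℝ)) = ⊤ := by
  -- partial derivatives of the components of A₀
  have q1 : ∀ z' y' : ℝ, pderivZ (fun a b => (A₀ a b).1) z' y'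
      = (b₂ * y' + (a₁ - a₂ - α + β)) + 2 * (-(b₁ * y' + α)) * z' := by
    intro z' y'
    have e : (fun a => (A₀ a y').1)
        = fun a : ℝ => β + (b₂ * y' + (a₁ - a₂ - α + β)) * a + (-(b₁ * y' + α)) * a ^ 2 := by
      funext a; rw [hA₀]; dsimp only; ring
    rw [pderivZ, e, deriv_quad]
  have q2 : ∀ z' y' : ℝ, pderivY (fun a b => (A₀ a b).1) z' y' = (b₂ - b₁ * z') * z' := by
    intro z' y'
    have e : (fun b => (A₀ z' b).1)
        = fun b : ℝ => (β + (a₁ - a₂ - α + β) * z' - α * z' ^ 2)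
            + ((b₂ - b₁ * z') * z') * b + 0 * b ^ 2 := by
      funext b; rw [hA₀]; dsimp only; ring
    rw [pderivY, e, deriv_quad]; ring
  have q3 : ∀ z' y' : ℝ, pderivZ (fun a b => (A₀ a b).2) z' y' = α * y' := by
    intro z' y'
    have e : (fun a => (A₀ a y').2)
        = fun a : ℝ => y' * ((a₂ - β) - σ ^ 2 / 2 - b₂ * y') + (α * y') * a + 0 * a ^ 2 := by
      funext a; rw [hA₀]; dsimp only; ring
    rw [pderivZ, e, deriv_quad]; ring
  have q4 : ∀ z' y' : ℝ, pderivY (fun a b => (A₀ a b).2) z' y'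
      = ((a₂ - β) - σ ^ 2 / 2 + α * z') + 2 * (-b₂) * y' := by
    intro z' y'
    have e : (fun b => (A₀ z' b).2)
        = fun b : ℝ => 0 + (((a₂ - β) - σ ^ 2 / 2 + α * z')) * b + (-b₂) * b ^ 2 := by
      funext b; rw [hA₀]; dsimp only; ring
    rw [pderivY, e, deriv_quad]
  -- partial derivatives of the components of A₁
  have p1 : ∀ z' y' : ℝ, pderivZ (fun a b => (A₁ a b).1) z' y' = 0 := by
    intro z' y'
    have e : (fun a => (A₁ a y').1) = fun _ : ℝ => (0 : ℝ) := by funext a; rw [hA₁]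
    rw [pderivZ, e, deriv_const]
  have p2 : ∀ z' y' : ℝ, pderivY (fun a b => (A₁ a b).1) z' y' = 0 := by
    intro z' y'
    have e : (fun b => (A₁ z' b).1) = fun _ : ℝ => (0 : ℝ) := by funext b; rw [hA₁]
    rw [pderivY, e, deriv_const]
  have p3 : ∀ z' y' : ℝ, pderivZ (fun a b => (A₁ a b).2) z' y' = 0 := by
    intro z' y'
    have e : (fun a => (A₁ a y').2) = fun _ : ℝ => σ * y' := by funext a; rw [hA₁]
    rw [pderivZ, e, deriv_const]
  have p4 : ∀ z' y' : ℝ, pderivY (fun a b => (A₁ a b).2) z' y' = σ := by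
    intro z' y'
    have e : (fun b => (A₁ z' b).2) = fun b : ℝ => 0 + σ * b + 0 * b ^ 2 := by
      funext b; rw [hA₁]; dsimp only; ring
    rw [pderivY, e, deriv_quad]; ring
  -- the first bracket
  have hB : ∀ z' y' : ℝ, lieBracket2 A₀ A₁ z' y'
      = (-(σ * y' * ((b₂ - b₁ * z') * z')), σ * b₂ * y' ^ 2) := by
    intro z' y'
    rw [lieBracket2, p1, p2, p3, p4, q1, q2, q3, q4, hA₀, hA₁]
    dsimp only
    simp only [Prod.mk.injEq]
    constructor <;> ring
  intro z y hz hy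
  -- partial derivatives of the first component of the first bracket
  have r1 : pderivZ (fun a b => (lieBracket2 A₀ A₁ a b).1) z y = -(σ * y * b₂) + 2 * (σ * y * b₁) * z := by
    have e : (fun a => (lieBracket2 A₀ A₁ a y).1)
        = fun a : ℝ => 0 + (-(σ * y * b₂)) * a + (σ * y * b₁) * a ^ 2 := by
      funext a; rw [hB]; dsimp only; ring
    rw [pderivZ, e, deriv_quad]
  have r2 : pderivY (fun a b => (lieBracket2 A₀ A₁ a b).1) z y = -(σ * ((b₂ - b₁ * z) * z)) := by
    have e : (fun b => (lieBracket2 A₀ A₁ z b).1)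
        = fun b : ℝ => 0 + (-(σ * ((b₂ - b₁ * z) * z))) * b + 0 * b ^ 2 := by
      funext b; rw [hB]; dsimp only; ring
    rw [pderivY, e, deriv_quad]; ring
  -- the first component of the second bracket
  have hC1 : (lieBracket2 A₀ (lieBracket2 A₀ A₁) z y).1 =
      ((b₂ - b₁ * z) * z * y + β + (a₁ - a₂ - α + β) * z - α * z ^ 2)
          * (-(σ * y * b₂) + 2 * (σ * y * b₁) * z)
        - (-(σ * y * ((b₂ - b₁ * z) * z)))
          * ((b₂ * y + (a₁ - a₂ - α + β)) + 2 * (-(b₁ * y + α)) * z)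
        + (y * ((a₂ - β) - σ ^ 2 / 2 - b₂ * y) + α * z * y)
          * (-(σ * ((b₂ - b₁ * z) * z)))
        - (σ * b₂ * y ^ 2) * ((b₂ - b₁ * z) * z) := by
    rw [lieBracket2]
    dsimp only
    rw [r1, r2, q1, q2, hA₀, hB]
  by_cases hcase : b₂ - b₁ * z = 0
  · -- use A₁ and the double bracket
    have hzeq : z = b₂ / b₁ := by field_simp; linarith
    have hCval : (lieBracket2 A₀ (lieBracket2 A₀ A₁) z y).1
        = σ * y * b₂ * (β + (b₂ / b₁) * (a₁ - a₂ - α + β) - α * (b₂ / b₁) ^ 2) := by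
      rw [hC1, hzeq]
      have hb₁' : b₁ ≠ 0 := ne_of_gt hb₁
      field_simp
      ring
    have hdet : (A₁ z y).1 * (lieBracket2 A₀ (lieBracket2 A₀ A₁) z y).2
        - (A₁ z y).2 * (lieBracket2 A₀ (lieBracket2 A₀ A₁) z y).1 ≠ 0 := by
      rw [hA₁, hCval]
      dsimp only
      have : σ * y * (σ * y * b₂ * (β + b₂ / b₁ * (a₁ - a₂ - α + β) - α * (b₂ / b₁) ^ 2)) ≠ 0 := by
        apply mul_ne_zero
        apply mul_ne_zero hσ (ne_of_gt hy)
        exact mul_ne_zero (mul_ne_zero (mul_ne_zero hσ (ne_of_gt hy)) (ne_of_gt hb₂)) hnd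
      intro hcontra
      apply this
      linarith [hcontra]
    have hsub : ({A₁ z y, lieBracket2 A₀ (lieBracket2 A₀ A₁) z y} : Set (ℝ × ℝ))
        ⊆ ({A₁ z y, lieBracket2 A₀ A₁ z y, lieBracket2 A₀ (lieBracket2 A₀ A₁) z y} : Set (ℝ × ℝ)) := by
      intro x hx
      rcases hx with h | h
      · exact Or.inl h
      · exact Or.inr (Or.inr h)
    exact le_antisymm le_top (by rw [← span_pair_top _ _ hdet]; exact Submodule.span_mono hsub)
  · -- use A₁ and the first bracket
    have hdet : (A₁ z y).1 * (lieBracket2 A₀ A₁ z y).2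
        - (A₁ z y).2 * (lieBracket2 A₀ A₁ z y).1 ≠ 0 := by
      rw [hA₁, hB]
      dsimp only
      have : σ * y * (σ * y * ((b₂ - b₁ * z) * z)) ≠ 0 := by
        apply mul_ne_zero (mul_ne_zero hσ (ne_of_gt hy))
        exact mul_ne_zero (mul_ne_zero hσ (ne_of_gt hy)) (mul_ne_zero hcase (ne_of_gt hz))
      intro hcontra
      apply this
      linarith [hcontra]
    have hsub : ({A₁ z y, lieBracket2 A₀ A₁ z y} : Set (ℝ × ℝ))
        ⊆ ({A₁ z y, lieBracket2 A₀ A₁ z y, lieBracket2 A₀ (lieBracket2 A₀ A₁) z y} : Set (ℝ × ℝ)) := by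
      intro x hx
      rcases hx with h | h
      · exact Or.inl h
      · exact Or.inr (Or.inl h)
    exact le_antisymm le_top (by rw [← span_pair_top _ _ hdet]; exact Submodule.span_mono hsub)
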